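/- Let p ≠ q be points in the plane, let H⁺ and H⁻ be the two open halfplanes bounded by the line through p and q, and let D₁, D₂ be closed discs whose boundary circles both pass through p and q. Then D₁ ∩ H⁺ ⊆ D₂ ∩ H⁺ or D₂ ∩ H⁺ ⊆ D₁ ∩ H⁺; moreover D₁ ∩ H⁺ ⊆ D₂ ∩ H⁺ holds if and only if D₂ ∩ H⁻ ⊆ D₁ ∩ H⁻. -/

import Mathlib

noncomputable section

/-- Points of the Euclidean plane. -/
abbrev Pt := EuclideanSpace ℝ (Fin 2)

/-- The orientation (cross product) determinant of the triple `(p, q, r)`; it is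
positive on one open halfplane bounded by the line `pq`, negative on the other,
and zero exactly on the line. -/
def orient (p q r : Pt) : ℝ :=
  (q 0 - p 0) * (r 1 - p 1) - (q 1 - p 1) * (r 0 - p 0)

set_option maxHeartbeats 1000000

lemma memBall (x c : Pt) (ρ : ℝ) (hρ : 0 ≤ ρ) :
    x ∈ Metric.closedBall c ρ ↔ (x 0 - c 0)^2 + (x 1 - c 1)^2 ≤ ρ^2 := by
  rw [Metric.mem_closedBall, EuclideanSpace.dist_eq, Fin.sum_univ_two,
    Real.dist_eq, Real.dist_eq, sq_abs, sq_abs,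
    show Real.sqrt ((x 0 - c 0)^2 + (x 1 - c 1)^2) ≤ ρ ↔
      Real.sqrt ((x 0 - c 0)^2 + (x 1 - c 1)^2) ≤ Real.sqrt (ρ^2) by
        rw [Real.sqrt_sq hρ],
    Real.sqrt_le_sqrt_iff (by positivity)]

lemma distSq (a c : Pt) (ρ : ℝ) (h : dist a c = ρ) :
    (a 0 - c 0)^2 + (a 1 - c 1)^2 = ρ^2 := by
  have h2 : Real.sqrt ((a 0 - c 0)^2 + (a 1 - c 1)^2) = ρ := by
    rw [← h, EuclideanSpace.dist_eq, Fin.sum_univ_two, Real.dist_eq, Real.dist_eq,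
      sq_abs, sq_abs]
  rw [← h2, Real.sq_sqrt (by positivity)]

lemma capKey (p0 p1 q0 q1 c0 c1 d0 d1 x0 x1 ρc ρd : ℝ)
    (hV : 0 < (q0-p0)^2+(q1-p1)^2)
    (hcp : (p0-c0)^2+(p1-c1)^2 = ρc^2) (hcq : (q0-c0)^2+(q1-c1)^2 = ρc^2)
    (hdp : (p0-d0)^2+(p1-d1)^2 = ρd^2) (hdq : (q0-d0)^2+(q1-d1)^2 = ρd^2)
    (hprod : 0 ≤ ((q0-p0)*(x1-p1)-(q1-p1)*(x0-p0)) *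
      (((q0-p0)*(d1-p1)-(q1-p1)*(d0-p0)) - ((q0-p0)*(c1-p1)-(q1-p1)*(c0-p0))))
    (hx : (x0-c0)^2+(x1-c1)^2 ≤ ρc^2) :
    (x0-d0)^2+(x1-d1)^2 ≤ ρd^2 := by
  have hVe : (q0-p0)*(d0-c0)+(q1-p1)*(d1-c1) = 0 := by
    linear_combination ((hdp-hdq)-(hcp-hcq))/2
  have h2 : ((q0-p0)^2+(q1-p1)^2) * ((x0-p0)*(d0-c0)+(x1-p1)*(d1-c1)) =
      ((q0-p0)*(x1-p1)-(q1-p1)*(x0-p0)) *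
      (((q0-p0)*(d1-p1)-(q1-p1)*(d0-p0)) - ((q0-p0)*(c1-p1)-(q1-p1)*(c0-p0))) := by
    linear_combination ((x0-p0)*(q0-p0)+(x1-p1)*(q1-p1)) * hVe
  have h3 : 0 ≤ ((q0-p0)^2+(q1-p1)^2) * ((x0-p0)*(d0-c0)+(x1-p1)*(d1-c1)) := by
    rw [h2]; exact hprod
  have hxe : 0 ≤ (x0-p0)*(d0-c0)+(x1-p1)*(d1-c1) := by
    have h4 := div_nonneg h3 hV.le
    rwa [mul_div_cancel_left₀ _ (ne_of_gt hV)] at h4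
  have hfin : (x0-d0)^2+(x1-d1)^2 - ((p0-d0)^2+(p1-d1)^2) =
      (x0-c0)^2+(x1-c1)^2 - ((p0-c0)^2+(p1-c1)^2)
        - 2*((x0-p0)*(d0-c0)+(x1-p1)*(d1-c1)) := by ring
  linarith

lemma capWit (p0 p1 q0 q1 c0 c1 d0 d1 ρ₁ ρ₂ : ℝ) (hρ₁ : 0 < ρ₁)
    (hV : 0 < (q0-p0)^2+(q1-p1)^2)
    (hcp : (p0-c0)^2+(p1-c1)^2 = ρ₁^2) (hcq : (q0-c0)^2+(q1-c1)^2 = ρ₁^2)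
    (hdp : (p0-d0)^2+(p1-d1)^2 = ρ₂^2) (hdq : (q0-d0)^2+(q1-d1)^2 = ρ₂^2)
    (ht : (q0-p0)*(d1-p1)-(q1-p1)*(d0-p0) < (q0-p0)*(c1-p1)-(q1-p1)*(c0-p0)) :
    ∃ x0 x1 : ℝ, (x0-c0)^2+(x1-c1)^2 ≤ ρ₁^2 ∧
      0 < (q0-p0)*(x1-p1)-(q1-p1)*(x0-p0) ∧
      ¬ ((x0-d0)^2+(x1-d1)^2 ≤ ρ₂^2) := by
  have hL : 0 < Real.sqrt ((q0-p0)^2+(q1-p1)^2) := Real.sqrt_pos.mpr hV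
  obtain ⟨s, hsdef⟩ : ∃ s, s = ρ₁ / Real.sqrt ((q0-p0)^2+(q1-p1)^2) := ⟨_, rfl⟩
  have hs : 0 < s := hsdef ▸ div_pos hρ₁ hL
  have hs2 : s^2 * ((q0-p0)^2+(q1-p1)^2) = ρ₁^2 := by
    rw [hsdef, div_pow, Real.sq_sqrt hV.le]
    field_simp
  obtain ⟨x0, hx0⟩ : ∃ x0, x0 = c0 - s*(q1-p1) := ⟨_, rfl⟩
  obtain ⟨x1, hx1⟩ : ∃ x1, x1 = c1 + s*(q0-p0) := ⟨_, rfl⟩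
  have hxc : (x0-c0)^2+(x1-c1)^2 = ρ₁^2 := by
    rw [hx0, hx1]; linear_combination hs2
  have hhx : (q0-p0)*(x1-p1)-(q1-p1)*(x0-p0)
      = ((q0-p0)*(c1-p1)-(q1-p1)*(c0-p0)) + s*((q0-p0)^2+(q1-p1)^2) := by
    rw [hx0, hx1]; ring
  have hbis : (q0-p0)*(c0-p0)+(q1-p1)*(c1-p1) = ((q0-p0)^2+(q1-p1)^2)/2 := by
    linear_combination (hcp-hcq)/2
  have hrad : (c0-p0)^2+(c1-p1)^2 = ρ₁^2 := by linear_combination hcp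
  have hkey : ((q0-p0)*(c1-p1)-(q1-p1)*(c0-p0))^2 + (((q0-p0)^2+(q1-p1)^2)/2)^2
      = ρ₁^2*((q0-p0)^2+(q1-p1)^2) := by
    linear_combination ((q0-p0)^2+(q1-p1)^2) * hrad -
      (((q0-p0)*(c0-p0)+(q1-p1)*(c1-p1)) + ((q0-p0)^2+(q1-p1)^2)/2) * hbis
  have hsW : ρ₁^2*((q0-p0)^2+(q1-p1)^2) = (s*((q0-p0)^2+(q1-p1)^2))^2 := by
    linear_combination ((q0-p0)^2+(q1-p1)^2) * hs2.symm
  have hpos : 0 < (q0-p0)*(x1-p1)-(q1-p1)*(x0-p0) := by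
    rw [hhx]
    by_contra hle
    push_neg at hle
    have h5 : 0 < s*((q0-p0)^2+(q1-p1)^2) := mul_pos hs hV
    nlinarith [hkey, hsW, h5, hle, mul_pos hV hV,
      mul_nonneg (show (0:ℝ) ≤ s*((q0-p0)^2+(q1-p1)^2) - ((q0-p0)*(c1-p1)-(q1-p1)*(c0-p0)) by linarith)
        (show (0:ℝ) ≤ -(((q0-p0)*(c1-p1)-(q1-p1)*(c0-p0)) + s*((q0-p0)^2+(q1-p1)^2)) by linarith)]
  refine ⟨x0, x1, le_of_eq hxc, hpos, ?_⟩
  push_neg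
  have hxd : (x0-d0)^2+(x1-d1)^2 - ρ₂^2 = 2*((x0-p0)*(c0-d0)+(x1-p1)*(c1-d1)) := by
    linear_combination hdp + hxc - hcp
  have hVe : (q0-p0)*(c0-d0)+(q1-p1)*(c1-d1) = 0 := by
    linear_combination ((hcp-hcq)-(hdp-hdq))/2
  have h2 : ((q0-p0)^2+(q1-p1)^2) * ((x0-p0)*(c0-d0)+(x1-p1)*(c1-d1)) =
      ((q0-p0)*(x1-p1)-(q1-p1)*(x0-p0)) *
      (((q0-p0)*(c1-p1)-(q1-p1)*(c0-p0)) - ((q0-p0)*(d1-p1)-(q1-p1)*(d0-p0))) := by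
    linear_combination ((x0-p0)*(q0-p0)+(x1-p1)*(q1-p1)) * hVe
  have h3 : 0 < ((q0-p0)^2+(q1-p1)^2) * ((x0-p0)*(c0-d0)+(x1-p1)*(c1-d1)) :=
    h2 ▸ mul_pos hpos (sub_pos.mpr ht)
  have hxe : 0 < (x0-p0)*(c0-d0)+(x1-p1)*(c1-d1) := by
    have h4 := div_pos h3 hV
    rwa [mul_div_cancel_left₀ _ (ne_of_gt hV)] at h4
  linarith

lemma incl_side (p q c d : Pt) (ρc ρd : ℝ) (hρc : 0 ≤ ρc) (hρd : 0 ≤ ρd)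
    (hV : 0 < (q 0 - p 0)^2 + (q 1 - p 1)^2)
    (hcp : dist p c = ρc) (hcq : dist q c = ρc)
    (hdp : dist p d = ρd) (hdq : dist q d = ρd)
    (S : Set Pt) (hS : ∀ x ∈ S, 0 ≤ orient p q x * (orient p q d - orient p q c)) :
    Metric.closedBall c ρc ∩ S ⊆ Metric.closedBall d ρd ∩ S := by
  rintro x ⟨hx, hxS⟩
  refine ⟨?_, hxS⟩
  rw [memBall _ _ _ hρd]
  rw [memBall _ _ _ hρc] at hx
  exact capKey (p 0) (p 1) (q 0) (q 1) (c 0) (c 1) (d 0) (d 1) (x 0) (x 1) ρc ρd hV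
    (distSq p c ρc hcp) (distSq q c ρc hcq) (distSq p d ρd hdp) (distSq q d ρd hdq)
    (by simpa [orient] using hS x hxS) hx

/-- Given two closed discs `D₁, D₂` whose boundary circles pass through the distinct
points `p, q`, their caps in the open halfplane `H⁺` are nested, and
`D₁ ∩ H⁺ ⊆ D₂ ∩ H⁺` holds iff `D₂ ∩ H⁻ ⊆ D₁ ∩ H⁻` holds. -/
theorem stmt5 (p q c₁ c₂ : Pt) (ρ₁ ρ₂ : ℝ) (hρ₁ : 0 < ρ₁) (hρ₂ : 0 < ρ₂)
    (hpq : p ≠ q)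
    (hp₁ : dist p c₁ = ρ₁) (hq₁ : dist q c₁ = ρ₁)
    (hp₂ : dist p c₂ = ρ₂) (hq₂ : dist q c₂ = ρ₂) :
    (Metric.closedBall c₁ ρ₁ ∩ {x : Pt | 0 < orient p q x} ⊆
        Metric.closedBall c₂ ρ₂ ∩ {x : Pt | 0 < orient p q x} ∨
      Metric.closedBall c₂ ρ₂ ∩ {x : Pt | 0 < orient p q x} ⊆
        Metric.closedBall c₁ ρ₁ ∩ {x : Pt | 0 < orient p q x}) ∧
    (Metric.closedBall c₁ ρ₁ ∩ {x : Pt | 0 < orient p q x} ⊆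
        Metric.closedBall c₂ ρ₂ ∩ {x : Pt | 0 < orient p q x} ↔
      Metric.closedBall c₂ ρ₂ ∩ {x : Pt | orient p q x < 0} ⊆
        Metric.closedBall c₁ ρ₁ ∩ {x : Pt | orient p q x < 0}) := by
  have hV : 0 < (q 0 - p 0)^2 + (q 1 - p 1)^2 := by
    by_contra h
    push_neg at h
    apply hpq
    have h0 : p 0 = q 0 := by nlinarith [sq_nonneg (q 0 - p 0), sq_nonneg (q 1 - p 1)]
    have h1 : p 1 = q 1 := by nlinarith [sq_nonneg (q 0 - p 0), sq_nonneg (q 1 - p 1)]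
    ext i
    fin_cases i
    · exact h0
    · exact h1
  have hVs : 0 < (p 0 - q 0)^2 + (p 1 - q 1)^2 := by nlinarith [hV]
  have e1p := distSq p c₁ ρ₁ hp₁
  have e1q := distSq q c₁ ρ₁ hq₁
  have e2p := distSq p c₂ ρ₂ hp₂
  have e2q := distSq q c₂ ρ₂ hq₂
  -- inclusions from orientation comparisons
  have B1 : orient p q c₁ ≤ orient p q c₂ →
      Metric.closedBall c₁ ρ₁ ∩ {x : Pt | 0 < orient p q x} ⊆
        Metric.closedBall c₂ ρ₂ ∩ {x : Pt | 0 < orient p q x} := fun ht =>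
    incl_side p q c₁ c₂ ρ₁ ρ₂ hρ₁.le hρ₂.le hV hp₁ hq₁ hp₂ hq₂ _
      (fun x hx => mul_nonneg (le_of_lt hx) (by linarith))
  have B1' : orient p q c₂ ≤ orient p q c₁ →
      Metric.closedBall c₂ ρ₂ ∩ {x : Pt | 0 < orient p q x} ⊆
        Metric.closedBall c₁ ρ₁ ∩ {x : Pt | 0 < orient p q x} := fun ht =>
    incl_side p q c₂ c₁ ρ₂ ρ₁ hρ₂.le hρ₁.le hV hp₂ hq₂ hp₁ hq₁ _
      (fun x hx => mul_nonneg (le_of_lt hx) (by linarith))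
  have B2 : orient p q c₁ ≤ orient p q c₂ →
      Metric.closedBall c₂ ρ₂ ∩ {x : Pt | orient p q x < 0} ⊆
        Metric.closedBall c₁ ρ₁ ∩ {x : Pt | orient p q x < 0} := fun ht =>
    incl_side p q c₂ c₁ ρ₂ ρ₁ hρ₂.le hρ₁.le hV hp₂ hq₂ hp₁ hq₁ _
      (fun x (hx : orient p q x < 0) => by nlinarith [hx, ht])
  -- witness: if T₂ < T₁, the positive cap of D₁ is not inside D₂
  have W1 : orient p q c₂ < orient p q c₁ →
      ¬ (Metric.closedBall c₁ ρ₁ ∩ {x : Pt | 0 < orient p q x} ⊆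
        Metric.closedBall c₂ ρ₂ ∩ {x : Pt | 0 < orient p q x}) := by
    intro ht hsub
    obtain ⟨x0, x1, hin, hor, hout⟩ :=
      capWit (p 0) (p 1) (q 0) (q 1) (c₁ 0) (c₁ 1) (c₂ 0) (c₂ 1) ρ₁ ρ₂ hρ₁ hV
        e1p e1q e2p e2q (by simpa [orient] using ht)
    set X : Pt := (WithLp.equiv 2 (Fin 2 → ℝ)).symm ![x0, x1] with hX
    have hX0 : X 0 = x0 := rfl
    have hX1 : X 1 = x1 := rfl
    have hXin : X ∈ Metric.closedBall c₁ ρ₁ ∩ {x : Pt | 0 < orient p q x} := by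
      refine ⟨(memBall X c₁ ρ₁ hρ₁.le).mpr ?_, ?_⟩
      · rw [hX0, hX1]; exact hin
      · show 0 < orient p q X
        rw [orient, hX0, hX1]; exact hor
    obtain ⟨hb, -⟩ := hsub hXin
    rw [memBall X c₂ ρ₂ hρ₂.le, hX0, hX1] at hb
    exact hout hb
  -- witness: if T₂ < T₁, the negative cap of D₂ is not inside D₁
  have W2 : orient p q c₂ < orient p q c₁ →
      ¬ (Metric.closedBall c₂ ρ₂ ∩ {x : Pt | orient p q x < 0} ⊆
        Metric.closedBall c₁ ρ₁ ∩ {x : Pt | orient p q x < 0}) := by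
    intro ht hsub
    obtain ⟨x0, x1, hin, hor, hout⟩ :=
      capWit (q 0) (q 1) (p 0) (p 1) (c₂ 0) (c₂ 1) (c₁ 0) (c₁ 1) ρ₂ ρ₁ hρ₂ hVs
        e2q e2p e1q e1p (by simp only [orient] at ht; linarith)
    set X : Pt := (WithLp.equiv 2 (Fin 2 → ℝ)).symm ![x0, x1] with hX
    have hX0 : X 0 = x0 := rfl
    have hX1 : X 1 = x1 := rfl
    have hXin : X ∈ Metric.closedBall c₂ ρ₂ ∩ {x : Pt | orient p q x < 0} := by
      refine ⟨(memBall X c₂ ρ₂ hρ₂.le).mpr ?_, ?_⟩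
      · rw [hX0, hX1]; exact hin
      · show orient p q X < 0
        rw [orient, hX0, hX1]; linarith
    obtain ⟨hb, -⟩ := hsub hXin
    rw [memBall X c₁ ρ₁ hρ₁.le, hX0, hX1] at hb
    exact hout hb
  constructor
  · rcases le_total (orient p q c₁) (orient p q c₂) with ht | ht
    · exact Or.inl (B1 ht)
    · exact Or.inr (B1' ht)
  · constructor
    · intro hsub
      rcases le_or_gt (orient p q c₁) (orient p q c₂) with ht | ht
      · exact B2 ht
      · exact absurd hsub (W1 ht)
    · intro hsub
      rcases le_or_gt (orient p q c₁) (orient p q c₂) with ht | ht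
      · exact B1 ht
      · exact absurd hsub (W2 ht)
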